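/- Let x be a solution of the COVID-19 system with x(t) in the nonnegative orthant for all t ≥ 0. Then the total population satisfies N(t) ≤ Λ/μ + (N(0) − Λ/μ)·e^{−μt} for all t ≥ 0; in particular N(t) ≤ Λ/μ + N(0) for all t ≥ 0. -/

import Mathlib

open scoped BigOperators

/-- The vector field of the deterministic SQEAIHR COVID-19 model.
State: `x = (S, Q, E, A, I, H, R)` indexed by `Fin 7`. -/
noncomputable def covidF (Λ b q lam μ σ εA γA dA εI γI dI γH dH θ p β₁ β₂ : ℝ)
    (x : Fin 7 → ℝ) : Fin 7 → ℝ :=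
  ![Λ - (β₁ - β₂ * x 4 / (b + x 4)) * x 0 * (x 4 + θ * x 3) + lam * x 1 - (μ + q) * x 0,
    q * x 0 - (μ + lam) * x 1,
    (β₁ - β₂ * x 4 / (b + x 4)) * x 0 * (x 4 + θ * x 3) - (μ + σ) * x 2,
    (1 - p) * σ * x 2 - (μ + εA + γA + dA) * x 3,
    σ * p * x 2 - (μ + εI + γI + dI) * x 4,
    εI * x 4 + εA * x 3 - (μ + dH + γH) * x 5,
    γH * x 5 + γI * x 4 + γA * x 3 - μ * x 6]

/-- A solution of the system on `[0, ∞)`: a function differentiable (within `[0,∞)`) whose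
derivative equals the vector field at every `t ≥ 0`. -/
def IsSolution (F : (Fin 7 → ℝ) → Fin 7 → ℝ) (x : ℝ → Fin 7 → ℝ) : Prop :=
  ∀ t : ℝ, 0 ≤ t → HasDerivWithinAt x (F (x t)) (Set.Ici (0 : ℝ)) t

private lemma vec7_five {α : Type*} (a0 a1 a2 a3 a4 a5 a6 : α) :
    (![a0,a1,a2,a3,a4,a5,a6] : Fin 7 → α) 5 = a5 := rfl

private lemma vec7_six {α : Type*} (a0 a1 a2 a3 a4 a5 a6 : α) :
    (![a0,a1,a2,a3,a4,a5,a6] : Fin 7 → α) 6 = a6 := rfl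

/-- the total population of a nonnegative solution satisfies
`N(t) ≤ Λ/μ + (N(0) − Λ/μ)·exp(−μt)` and hence `N(t) ≤ Λ/μ + N(0)` for all `t ≥ 0`. -/
theorem covid_total_population_bound
    (Λ b q lam μ σ εA γA dA εI γI dI γH dH θ p β₁ β₂ : ℝ)
    (hΛ : 0 < Λ) (hb : 0 < b) (hq : 0 < q) (hlam : 0 < lam) (hμ : 0 < μ)
    (hσ : 0 < σ) (hεA : 0 < εA) (hγA : 0 < γA) (hdA : 0 < dA)
    (hεI : 0 < εI) (hγI : 0 < γI) (hdI : 0 < dI) (hγH : 0 < γH) (hdH : 0 < dH)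
    (hθ : θ ∈ Set.Ioo (0 : ℝ) 1) (hp : p ∈ Set.Ioo (0 : ℝ) 1)
    (hβ₂ : 0 < β₂) (hβ : β₂ ≤ β₁)
    (x : ℝ → Fin 7 → ℝ)
    (hx : IsSolution (covidF Λ b q lam μ σ εA γA dA εI γI dI γH dH θ p β₁ β₂) x)
    (hnonneg : ∀ t : ℝ, 0 ≤ t → ∀ i, 0 ≤ x t i) :
    ∀ t : ℝ, 0 ≤ t →
      (∑ i, x t i) ≤ Λ / μ + ((∑ i, x 0 i) - Λ / μ) * Real.exp (-μ * t) ∧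
      (∑ i, x t i) ≤ Λ / μ + ∑ i, x 0 i := by
  set N : ℝ → ℝ := fun t => ∑ i, x t i with hNdef
  -- derivative of N
  have hN' : ∀ t : ℝ, 0 ≤ t → HasDerivWithinAt N
      (Λ - μ * N t - dA * x t 3 - dI * x t 4 - dH * x t 5) (Set.Ici 0) t := by
    intro t ht
    have h := hx t ht
    have hcomp : ∀ i : Fin 7, HasDerivWithinAt (fun s => x s i)
        (covidF Λ b q lam μ σ εA γA dA εI γI dI γH dH θ p β₁ β₂ (x t) i)
        (Set.Ici 0) t := (hasDerivWithinAt_pi.mp h)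
    have hsum : HasDerivWithinAt N
        (∑ i, covidF Λ b q lam μ σ εA γA dA εI γI dI γH dH θ p β₁ β₂ (x t) i)
        (Set.Ici 0) t := by
      have := HasDerivWithinAt.fun_sum (u := (Finset.univ : Finset (Fin 7)))
        (fun i _ => hcomp i)
      simpa [hNdef] using this
    have heq : (∑ i, covidF Λ b q lam μ σ εA γA dA εI γI dI γH dH θ p β₁ β₂ (x t) i)
        = Λ - μ * N t - dA * x t 3 - dI * x t 4 - dH * x t 5 := by
      simp only [covidF, Fin.sum_univ_seven, hNdef]
      simp only [vec7_five, vec7_six, Matrix.cons_val_zero, Matrix.cons_val_one,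
        Matrix.head_cons, Matrix.cons_val_two, Matrix.tail_cons, Matrix.cons_val_three,
        Matrix.cons_val_four]
      ring
    rwa [heq] at hsum
  have hcontN : ContinuousOn N (Set.Ici 0) := fun t ht =>
    (hN' t ht).continuousWithinAt
  -- the auxiliary function g
  set g : ℝ → ℝ := fun t => (N t - Λ / μ) * Real.exp (μ * t) with hgdef
  have hgderiv : ∀ t : ℝ, 0 < t → HasDerivAt g
      (-(dA * x t 3 + dI * x t 4 + dH * x t 5) * Real.exp (μ * t)) t := by
    intro t ht
    have hNd : HasDerivAt N (Λ - μ * N t - dA * x t 3 - dI * x t 4 - dH * x t 5) t :=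
      (hN' t ht.le).hasDerivAt (Ici_mem_nhds ht)
    have hlin : HasDerivAt (fun s : ℝ => μ * s) μ t := by
      simpa using (hasDerivAt_id t).const_mul μ
    have hexp : HasDerivAt (fun s : ℝ => Real.exp (μ * s)) (Real.exp (μ * t) * μ) t :=
      hlin.exp
    have := (hNd.sub_const (Λ / μ)).fun_mul hexp
    refine this.congr_deriv ?_
    have hμ' : μ ≠ 0 := ne_of_gt hμ
    have hc : Λ / μ * μ = Λ := div_mul_cancel₀ Λ hμ'
    linear_combination (-Real.exp (μ * t)) * hc
  have hAnti : AntitoneOn g (Set.Ici 0) := by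
    apply antitoneOn_of_deriv_nonpos (convex_Ici 0)
    · exact ((hcontN.sub continuousOn_const).mul
        (Real.continuous_exp.comp (continuous_const.mul continuous_id)).continuousOn)
    · intro t ht
      rw [interior_Ici] at ht
      exact ((hgderiv t ht).differentiableAt).differentiableWithinAt
    · intro t ht
      rw [interior_Ici] at ht
      rw [(hgderiv t ht).deriv]
      have h3 := hnonneg t ht.le 3
      have h4 := hnonneg t ht.le 4
      have h5 := hnonneg t ht.le 5
      have : 0 ≤ dA * x t 3 + dI * x t 4 + dH * x t 5 := by positivity
      have he : 0 < Real.exp (μ * t) := Real.exp_pos _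
      nlinarith
  intro t ht
  have hgt : g t ≤ g 0 := hAnti Set.self_mem_Ici ht ht
  have hg0 : g 0 = N 0 - Λ / μ := by simp [hgdef]
  have hkey : N t - Λ / μ ≤ (N 0 - Λ / μ) * Real.exp (-μ * t) := by
    have hpos : 0 < Real.exp (-μ * t) := Real.exp_pos _
    have := mul_le_mul_of_nonneg_right hgt hpos.le
    rw [hg0] at this
    have hone : Real.exp (μ * t) * Real.exp (-μ * t) = 1 := by
      rw [← Real.exp_add]; norm_num
    calc N t - Λ / μ = (N t - Λ / μ) * (Real.exp (μ * t) * Real.exp (-μ * t)) := by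
          rw [hone]; ring
      _ = g t * Real.exp (-μ * t) := by rw [hgdef]; ring
      _ ≤ (N 0 - Λ / μ) * Real.exp (-μ * t) := this
  have hfirst : N t ≤ Λ / μ + (N 0 - Λ / μ) * Real.exp (-μ * t) := by linarith
  refine ⟨hfirst, ?_⟩
  have hN0 : 0 ≤ N 0 := Finset.sum_nonneg fun i _ => hnonneg 0 le_rfl i
  have hΛμ : 0 ≤ Λ / μ := le_of_lt (div_pos hΛ hμ)
  have hexp1 : Real.exp (-μ * t) ≤ 1 := by
    apply Real.exp_le_one_iff.mpr
    nlinarith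
  have hexp0 : 0 < Real.exp (-μ * t) := Real.exp_pos _
  have : (N 0 - Λ / μ) * Real.exp (-μ * t) ≤ N 0 := by
    rcases le_or_gt (N 0 - Λ / μ) 0 with h | h
    · nlinarith
    · nlinarith
  linarith
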